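/- Let R be a commutative ring in which 2 is invertible, and let x, y ∈ R. Set a = (xy − y⁵, x, y³, y², y, 1, 0) ∈ R⁷. Then: (i) Q₁(a) = Q₂(a) = Q₃(a) = Q₄(a) = Q₅(a) = 0, i.e. the point Φ(x,y) = (xy−y⁵ : x : y³ : y² : y : 1 : 0) lies on the split quintic del Pezzo threefold Y; and (ii) U(−y/2) · a = (0, x − (5/4)y⁴, 0, 0, 0, 1, 0), i.e. acting by the unipotent matrix with parameter −y/2 moves Φ(x,y) to the point (0 : x − (5/4)y⁴ : 0 : 0 : 0 : 1 : 0). -/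

import Mathlib

/-- The 7×7 matrix `U(b)` of the unipotent one-parameter subgroup of the `PGL₂`-action on
the split quintic del Pezzo threefold `Y ⊂ ℙ⁶`. -/
def Umat {R : Type*} [CommRing R] (b : R) : Matrix (Fin 7) (Fin 7) R :=
  !![1, 2*b, 10*b^2, 20*b^3, 20*b^4, 8*b^5, 8*b^6;
     0, 1, 10*b, 30*b^2, 40*b^3, 20*b^4, 24*b^5;
     0, 0, 1, 6*b, 12*b^2, 8*b^3, 12*b^4;
     0, 0, 0, 1, 4*b, 4*b^2, 8*b^3;
     0, 0, 0, 0, 1, 2*b, 6*b^2;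
     0, 0, 0, 0, 0, 1, 6*b;
     0, 0, 0, 0, 0, 0, 1]

@[simp] lemma vec7_0 {α : Type*} (a0 a1 a2 a3 a4 a5 a6 : α) :
    ![a0, a1, a2, a3, a4, a5, a6] (0 : Fin 7) = a0 := rfl

@[simp] lemma vec7_1 {α : Type*} (a0 a1 a2 a3 a4 a5 a6 : α) :
    ![a0, a1, a2, a3, a4, a5, a6] (1 : Fin 7) = a1 := rfl

@[simp] lemma vec7_2 {α : Type*} (a0 a1 a2 a3 a4 a5 a6 : α) :
    ![a0, a1, a2, a3, a4, a5, a6] (2 : Fin 7) = a2 := rfl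

@[simp] lemma vec7_3 {α : Type*} (a0 a1 a2 a3 a4 a5 a6 : α) :
    ![a0, a1, a2, a3, a4, a5, a6] (3 : Fin 7) = a3 := rfl

@[simp] lemma vec7_4 {α : Type*} (a0 a1 a2 a3 a4 a5 a6 : α) :
    ![a0, a1, a2, a3, a4, a5, a6] (4 : Fin 7) = a4 := rfl

@[simp] lemma vec7_5 {α : Type*} (a0 a1 a2 a3 a4 a5 a6 : α) :
    ![a0, a1, a2, a3, a4, a5, a6] (5 : Fin 7) = a5 := rfl

@[simp] lemma vec7_6 {α : Type*} (a0 a1 a2 a3 a4 a5 a6 : α) :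
    ![a0, a1, a2, a3, a4, a5, a6] (6 : Fin 7) = a6 := rfl

@[simp] lemma vec7_mk_0 {α : Type*} (a0 a1 a2 a3 a4 a5 a6 : α) (h : 0 < 7) :
    ![a0, a1, a2, a3, a4, a5, a6] (⟨0, h⟩ : Fin 7) = a0 := rfl

@[simp] lemma vec7_mk_1 {α : Type*} (a0 a1 a2 a3 a4 a5 a6 : α) (h : 1 < 7) :
    ![a0, a1, a2, a3, a4, a5, a6] (⟨1, h⟩ : Fin 7) = a1 := rfl

@[simp] lemma vec7_mk_2 {α : Type*} (a0 a1 a2 a3 a4 a5 a6 : α) (h : 2 < 7) :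
    ![a0, a1, a2, a3, a4, a5, a6] (⟨2, h⟩ : Fin 7) = a2 := rfl

@[simp] lemma vec7_mk_3 {α : Type*} (a0 a1 a2 a3 a4 a5 a6 : α) (h : 3 < 7) :
    ![a0, a1, a2, a3, a4, a5, a6] (⟨3, h⟩ : Fin 7) = a3 := rfl

@[simp] lemma vec7_mk_4 {α : Type*} (a0 a1 a2 a3 a4 a5 a6 : α) (h : 4 < 7) :
    ![a0, a1, a2, a3, a4, a5, a6] (⟨4, h⟩ : Fin 7) = a4 := rfl

@[simp] lemma vec7_mk_5 {α : Type*} (a0 a1 a2 a3 a4 a5 a6 : α) (h : 5 < 7) :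
    ![a0, a1, a2, a3, a4, a5, a6] (⟨5, h⟩ : Fin 7) = a5 := rfl

@[simp] lemma vec7_mk_6 {α : Type*} (a0 a1 a2 a3 a4 a5 a6 : α) (h : 6 < 7) :
    ![a0, a1, a2, a3, a4, a5, a6] (⟨6, h⟩ : Fin 7) = a6 := rfl

/-- In a commutative ring where 2 is invertible, the point
`Φ(x,y) = (xy - y⁵, x, y³, y², y, 1, 0)` of the affine chart of `Y`: (i) satisfies the
five quadrics `Q₁, …, Q₅` cutting out `Y`; and (ii) is moved by the unipotent matrix
`U(-y/2)` to the point `(0, x - (5/4)y⁴, 0, 0, 0, 1, 0)`. -/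
theorem stmt_19 {R : Type*} [CommRing R] [Invertible (2 : R)] (x y : R)
    (v : Fin 7 → R) (hv : v = ![x * y - y ^ 5, x, y ^ 3, y ^ 2, y, 1, 0]) :
    (v 0 * v 4 - v 1 * v 3 + (v 2) ^ 2 = 0 ∧
     v 0 * v 5 - v 1 * v 4 + v 2 * v 3 = 0 ∧
     v 0 * v 6 - v 2 * v 4 + (v 3) ^ 2 = 0 ∧
     v 1 * v 6 - v 2 * v 5 + v 3 * v 4 = 0 ∧
     v 2 * v 6 - v 3 * v 5 + (v 4) ^ 2 = 0) ∧
    Matrix.mulVec (Umat (-(⅟(2 : R) * y))) v =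
      ![0, x - 5 * (⅟(2 : R) * ⅟(2 : R)) * y ^ 4, 0, 0, 0, 1, 0] := by
  have h2 : ⅟(2 : R) * 2 = 1 := invOf_mul_self 2
  subst hv
  constructor
  · refine ⟨?_, ?_, ?_, ?_, ?_⟩ <;>
      simp only [vec7_0, vec7_1, vec7_2, vec7_3, vec7_4, vec7_5, vec7_6] <;> ring
  have key : ∀ k : Fin 7,
      Matrix.mulVec (Umat (-(⅟(2 : R) * y))) ![x * y - y ^ 5, x, y ^ 3, y ^ 2, y, 1, 0] k =
      ![0, x - 5 * (⅟(2 : R) * ⅟(2 : R)) * y ^ 4, 0, 0, 0, 1, 0] k := by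
    simp only [Umat, Matrix.cons_mulVec, Matrix.cons_dotProduct, Matrix.dotProduct_of_isEmpty,
      Matrix.head_cons, Matrix.tail_cons, Matrix.empty_mulVec, add_zero]
    intro k
    fin_cases k <;>
      simp only [vec7_0, vec7_1, vec7_2, vec7_3, vec7_4, vec7_5, vec7_6, vec7_mk_0, vec7_mk_1,
      vec7_mk_2, vec7_mk_3, vec7_mk_4, vec7_mk_5, vec7_mk_6]
    · linear_combination (y^5 + 2*y^5*⅟(2:R) - 6*y^5*⅟(2:R)^2 + 8*y^5*⅟(2:R)^3 - 4*y^5*⅟(2:R)^4 - x*y) * h2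
    · linear_combination (10*y^4*⅟(2:R) - 15*y^4*⅟(2:R)^2 + 10*y^4*⅟(2:R)^3) * h2
    · linear_combination (-y^3 + 4*y^3*⅟(2:R) - 4*y^3*⅟(2:R)^2) * h2
    · linear_combination (-y^2 + 2*y^2*⅟(2:R)) * h2
    · linear_combination (-y) * h2
    · linear_combination (0:R) * h2
    · linear_combination (0:R) * h2
  exact funext key
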